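/- Let (A, B) be a co-t-structure on a triangulated category T with co-heart S = A ∩ Σ⁻¹B. Then S * ΣS is closed under extensions and under direct summands. -/

import Mathlib

open CategoryTheory Category Limits Pretriangulated

variable {C : Type*} [Category C] [Preadditive C] [HasZeroObject C] [HasShift C ℤ]
  [∀ n : ℤ, (shiftFunctor C n).Additive] [Pretriangulated C]

/-- A co-t-structure on a triangulated category: a pair of full subcategories (given by
their classes of objects) closed under direct summands, with `Σ⁻¹A ⊆ A`, `ΣB ⊆ B`,
`Hom(A, B) = 0`, and every object sitting in a triangle `a → t → b → Σa`. -/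
structure CoTStructure (A B : Set C) : Prop where
  summandA : ∀ x y : C, (∃ (i : x ⟶ y) (r : y ⟶ x), i ≫ r = 𝟙 x) → y ∈ A → x ∈ A
  summandB : ∀ x y : C, (∃ (i : x ⟶ y) (r : y ⟶ x), i ≫ r = 𝟙 x) → y ∈ B → x ∈ B
  shiftA : ∀ x ∈ A, x⟦(-1 : ℤ)⟧ ∈ A
  shiftB : ∀ x ∈ B, x⟦(1 : ℤ)⟧ ∈ B
  orth : ∀ a ∈ A, ∀ b ∈ B, ∀ f : a ⟶ b, f = 0
  tri : ∀ t : C, ∃ (a b : C) (_ : a ∈ A) (_ : b ∈ B) (f : a ⟶ t) (g : t ⟶ b)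
    (h : b ⟶ a⟦(1 : ℤ)⟧), Triangle.mk f g h ∈ distTriang C

/-- The co-heart `A ∩ Σ⁻¹B` of a co-t-structure. -/
def coheart (A B : Set C) : Set C := {x | x ∈ A ∧ x⟦(1 : ℤ)⟧ ∈ B}

/-- `S * T`: objects `e` admitting a distinguished triangle `s → e → t → Σs`
with `s ∈ S`, `t ∈ T`. -/
def starSet (S T : Set C) : Set C :=
  {e | ∃ (s t : C) (_ : s ∈ S) (_ : t ∈ T) (f : s ⟶ e) (g : e ⟶ t)
    (h : t ⟶ s⟦(1 : ℤ)⟧), Triangle.mk f g h ∈ distTriang C}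

/-- `ΣS`, described as those `x` with `Σ⁻¹x ∈ S`. -/
def shiftSet (S : Set C) : Set C := {x | x⟦(-1 : ℤ)⟧ ∈ S}

/-- `S * ΣS`: objects `t` admitting a distinguished triangle `s₁ → s₀ → t → Σs₁`
with `s₀, s₁ ∈ S`. -/
def twoTermSet (S : Set C) : Set C :=
  {t | ∃ (s₁ s₀ : C) (_ : s₁ ∈ S) (_ : s₀ ∈ S) (f : s₁ ⟶ s₀) (g : s₀ ⟶ t)
    (h : t ⟶ s₁⟦(1 : ℤ)⟧), Triangle.mk f g h ∈ distTriang C}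


section Aux

lemma CoTStructure.extA {A B : Set C} (h : CoTStructure A B) (T : Triangle C) (hT : T ∈ distTriang C)
    (h1 : T.obj₁ ∈ A) (h3 : T.obj₃ ∈ A) : T.obj₂ ∈ A := by
  have horth : ∀ b ∈ B, ∀ φ : T.obj₂ ⟶ b, φ = 0 := by
    intro b hb φ
    obtain ⟨ψ, hψ⟩ := Triangle.yoneda_exact₂ _ hT φ (h.orth _ h1 b hb (T.mor₁ ≫ φ))
    rw [hψ, h.orth _ h3 b hb ψ, comp_zero]
  obtain ⟨a, b, ha, hb, f', g', w', hT'⟩ := h.tri T.obj₂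
  obtain ⟨r, hr⟩ := Triangle.coyoneda_exact₂ _ hT' (𝟙 T.obj₂)
    (by exact horth b hb _)
  exact h.summandA _ a ⟨r, f', hr.symm⟩ ha

lemma CoTStructure.extB {A B : Set C} (h : CoTStructure A B) (T : Triangle C) (hT : T ∈ distTriang C)
    (h1 : T.obj₁ ∈ B) (h3 : T.obj₃ ∈ B) : T.obj₂ ∈ B := by
  have horth : ∀ a ∈ A, ∀ φ : a ⟶ T.obj₂, φ = 0 := by
    intro a ha φ
    obtain ⟨ψ, hψ⟩ := Triangle.coyoneda_exact₂ _ hT φ (h.orth a ha _ h3 (φ ≫ T.mor₂))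
    rw [hψ, h.orth a ha _ h1 ψ, zero_comp]
  obtain ⟨a, b, ha, hb, f', g', w', hT'⟩ := h.tri T.obj₂
  obtain ⟨r, hr⟩ := Triangle.yoneda_exact₂ _ hT' (𝟙 T.obj₂)
    (by exact horth a ha _)
  exact h.summandB _ b ⟨g', r, hr.symm⟩ hb

lemma CoTStructure.isoB {A B : Set C} (h : CoTStructure A B) {x y : C} (e : x ≅ y) (hy : y ∈ B) : x ∈ B :=
  h.summandB x y ⟨e.hom, e.inv, e.hom_inv_id⟩ hy

lemma CoTStructure.mem_twoTermSet_iff {A B : Set C} (h : CoTStructure A B) (t : C) :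
    t ∈ twoTermSet (coheart A B) ↔ t⟦(-1 : ℤ)⟧ ∈ A ∧ t⟦(1 : ℤ)⟧ ∈ B := by
  constructor
  · rintro ⟨s₁, s₀, ⟨hs₁A, hs₁B⟩, ⟨hs₀A, hs₀B⟩, f, g, w, hT⟩
    constructor
    · exact h.extA _ (inv_rot_of_distTriang _ (inv_rot_of_distTriang _ hT))
        (h.shiftA _ hs₀A) hs₁A
    · exact h.extB _ (rot_of_distTriang _ (rot_of_distTriang _ (rot_of_distTriang _
        (rot_of_distTriang _ hT)))) hs₀B (h.shiftB _ hs₁B)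
  · rintro ⟨ht1, ht2⟩
    obtain ⟨a, b, ha, hb, f, g, w, hT⟩ := h.tri t
    have hbA : b⟦(-1 : ℤ)⟧ ∈ A :=
      h.extA _ (inv_rot_of_distTriang _ (inv_rot_of_distTriang _ hT)) ht1 ha
    have hbB : b⟦(-1 : ℤ)⟧⟦(1 : ℤ)⟧ ∈ B :=
      h.isoB ((shiftEquiv C (1 : ℤ)).counitIso.app b) hb
    have haB : a⟦(1 : ℤ)⟧ ∈ B :=
      h.extB _ (rot_of_distTriang _ (rot_of_distTriang _ hT)) hb ht2
    exact ⟨b⟦(-1 : ℤ)⟧, a, ⟨hbA, hbB⟩, ⟨ha, haB⟩,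
      (Triangle.mk f g w).invRotate.mor₁, (Triangle.mk f g w).invRotate.mor₂,
      (Triangle.mk f g w).invRotate.mor₃, inv_rot_of_distTriang _ hT⟩

end Aux

/-- For a co-t-structure `(A, B)` with co-heart `S`, the subcategory `S * ΣS` is
closed under extensions and direct summands. -/
theorem stmt_3 (A B : Set C) (h : CoTStructure A B) :
    (∀ (x y z : C) (f : x ⟶ y) (g : y ⟶ z) (w : z ⟶ x⟦(1 : ℤ)⟧),
      Triangle.mk f g w ∈ (distTriang C) →
      x ∈ twoTermSet (coheart A B) → z ∈ twoTermSet (coheart A B) →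
      y ∈ twoTermSet (coheart A B)) ∧
    (∀ x y : C, (∃ (i : x ⟶ y) (r : y ⟶ x), i ≫ r = 𝟙 x) →
      y ∈ twoTermSet (coheart A B) → x ∈ twoTermSet (coheart A B)) := by
  constructor
  · intro x y z f g w hT hx hz
    rw [h.mem_twoTermSet_iff] at hx hz ⊢
    constructor
    · exact h.extA _ (inv_rot_of_distTriang _ (inv_rot_of_distTriang _
        (inv_rot_of_distTriang _ hT))) hx.1 hz.1
    · exact h.extB _ (rot_of_distTriang _ (rot_of_distTriang _ (rot_of_distTriang _ hT)))
        hx.2 hz.2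
  · rintro x y ⟨i, r, hir⟩ hy
    rw [h.mem_twoTermSet_iff] at hy ⊢
    constructor
    · exact h.summandA _ _ ⟨i⟦(-1 : ℤ)⟧', r⟦(-1 : ℤ)⟧',
        by rw [← Functor.map_comp, hir, CategoryTheory.Functor.map_id]⟩ hy.1
    · exact h.summandB _ _ ⟨i⟦(1 : ℤ)⟧', r⟦(1 : ℤ)⟧',
        by rw [← Functor.map_comp, hir, CategoryTheory.Functor.map_id]⟩ hy.2
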